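/- For every d ≥ 1 and every t ≥ 1, there exists a weighted unitary t-design (X, w) in U(d) with |X| ≤ dimHom(d, t, t). -/

import Mathlib

open MeasureTheory

noncomputable section

/-- `U(d)`: the group of `d × d` complex unitary matrices. -/
abbrev UG (d : ℕ) := Matrix.unitaryGroup (Fin d) ℂ

instance (d : ℕ) : MeasurableSpace (UG d) := borel _
instance (d : ℕ) : BorelSpace (UG d) := ⟨rfl⟩

/-- `Hom(r,s)`: the complex span of the monomial functions on `U(d)` that are homogeneous of
degree `r` in the entries of `U` and of degree `s` in the entries of `U*` (conjugates). -/
def homSpace (d r s : ℕ) : Submodule ℂ (UG d → ℂ) :=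
  Submodule.span ℂ
    {f : UG d → ℂ | ∃ (i j : Fin r → Fin d) (p q : Fin s → Fin d),
      f = fun U : UG d => (∏ k, (U : Matrix (Fin d) (Fin d) ℂ) (i k) (j k)) *
        ∏ k, (starRingEnd ℂ) ((U : Matrix (Fin d) (Fin d) ℂ) (p k) (q k))}

/-- A nonempty finite subset `X ⊆ U(d)` is a unitary `t`-design (with respect to the Haar
probability measure `μ`) if it averages every `f ∈ Hom(t,t)` correctly. -/
def IsUnitaryDesign (d t : ℕ) (μ : Measure (UG d)) (X : Finset (UG d)) : Prop :=
  X.Nonempty ∧ ∀ f ∈ homSpace d t t,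
    (1 / (X.card : ℂ)) * ∑ U ∈ X, f U = ∫ U, f U ∂μ

/-- `|tr(U* M)|²`, the squared trace inner product of two unitaries. -/
def trIP {d : ℕ} (U M : UG d) : ℝ :=
  ‖Matrix.trace (star (U : Matrix (Fin d) (Fin d) ℂ) *
    (M : Matrix (Fin d) (Fin d) ℂ))‖ ^ 2

/-- A weighted unitary `t`-design: a nonempty finite set with positive weights summing to `1`
that averages every `f ∈ Hom(t,t)` correctly. -/
def IsWeightedDesign (d t : ℕ) (μ : Measure (UG d)) (X : Finset (UG d)) (w : UG d → ℝ) : Prop :=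
  X.Nonempty ∧ (∀ U ∈ X, 0 < w U) ∧ (∑ U ∈ X, w U = 1) ∧
    ∀ f ∈ homSpace d t t, ∑ U ∈ X, (w U : ℂ) * f U = ∫ U, f U ∂μ

/-! ### Auxiliary material -/

open Module Set

instance (d : ℕ) : CompactSpace (UG d) := by
  suffices h : IsCompact (Matrix.unitaryGroup (Fin d) ℂ : Set (Matrix (Fin d) (Fin d) ℂ)) from
    isCompact_iff_compactSpace.mp h
  have hsub : (Matrix.unitaryGroup (Fin d) ℂ : Set (Matrix (Fin d) (Fin d) ℂ)) ⊆
      Set.pi Set.univ (fun _ : Fin d => Set.pi Set.univ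
        (fun _ : Fin d => Metric.closedBall (0:ℂ) 1)) := by
    intro U hU
    intro i _
    intro j _
    simp only [Metric.mem_closedBall, dist_zero_right]
    have h1 : U * star U = 1 := (Matrix.mem_unitaryGroup_iff).mp hU
    have h2 : (U * star U) i i = (1 : Matrix (Fin d) (Fin d) ℂ) i i := by rw [h1]
    rw [Matrix.mul_apply, Matrix.one_apply_eq] at h2
    have h3 : ∑ k, Complex.normSq (U i k) = 1 := by
      have := congrArg Complex.re h2
      rw [Complex.re_sum] at this
      simpa [Matrix.star_apply, Complex.mul_conj] using this
    have h4 : Complex.normSq (U i j) ≤ 1 := by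
      rw [← h3]
      exact Finset.single_le_sum (fun k _ => Complex.normSq_nonneg _) (Finset.mem_univ j)
    have h5 := Real.sqrt_le_sqrt h4
    rw [Real.sqrt_one] at h5
    calc ‖U i j‖ = Real.sqrt (Complex.normSq (U i j)) := by
            rw [Complex.norm_def]
      _ ≤ 1 := h5
  refine IsCompact.of_isClosed_subset ?_ ?_ hsub
  · exact isCompact_univ_pi fun _ => isCompact_univ_pi fun _ => isCompact_closedBall 0 1
  · have hcont : Continuous fun M : Matrix (Fin d) (Fin d) ℂ => M * star M :=
      (continuous_id.matrix_mul continuous_id.matrix_conjTranspose)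
    have h := isClosed_singleton (X := Matrix (Fin d) (Fin d) ℂ) (x := 1)
    have hset : (Matrix.unitaryGroup (Fin d) ℂ : Set (Matrix (Fin d) (Fin d) ℂ)) =
        (fun M : Matrix (Fin d) (Fin d) ℂ => M * star M) ⁻¹' {1} := by
      ext M
      simp [Matrix.mem_unitaryGroup_iff, Set.mem_preimage]
    rw [hset]
    exact h.preimage hcont

/-- The generating set of monomials. -/
def homGen (d r s : ℕ) : Set (UG d → ℂ) :=
  {f : UG d → ℂ | ∃ (i j : Fin r → Fin d) (p q : Fin s → Fin d),
      f = fun U : UG d => (∏ k, (U : Matrix (Fin d) (Fin d) ℂ) (i k) (j k)) *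
        ∏ k, (starRingEnd ℂ) ((U : Matrix (Fin d) (Fin d) ℂ) (p k) (q k))}

lemma homSpace_eq_span (d r s : ℕ) : homSpace d r s = Submodule.span ℂ (homGen d r s) := rfl

lemma homGen_finite (d r s : ℕ) : (homGen d r s).Finite := by
  have h : homGen d r s ⊆ Set.range (fun x : ((Fin r → Fin d) × (Fin r → Fin d)) ×
      ((Fin s → Fin d) × (Fin s → Fin d)) =>
      fun U : UG d => (∏ k, (U : Matrix (Fin d) (Fin d) ℂ) (x.1.1 k) (x.1.2 k)) *
        ∏ k, (starRingEnd ℂ) ((U : Matrix (Fin d) (Fin d) ℂ) (x.2.1 k) (x.2.2 k))) := by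
    rintro f ⟨i, j, p, q, rfl⟩
    exact ⟨((i, j), (p, q)), rfl⟩
  exact (Set.finite_range _).subset h

instance homSpace_fd (d r s : ℕ) : FiniteDimensional ℂ (homSpace d r s) := by
  rw [homSpace_eq_span]
  exact FiniteDimensional.span_of_finite ℂ (homGen_finite d r s)

lemma entry_continuous (d : ℕ) (i j : Fin d) :
    Continuous fun U : UG d => (U : Matrix (Fin d) (Fin d) ℂ) i j := by
  have h1 : Continuous fun U : UG d => (U : Matrix (Fin d) (Fin d) ℂ) :=
    continuous_subtype_val
  exact h1.matrix_elem i j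

lemma homGen_continuous {d r s : ℕ} {f : UG d → ℂ} (hf : f ∈ homGen d r s) : Continuous f := by
  obtain ⟨i, j, p, q, rfl⟩ := hf
  refine Continuous.mul ?_ ?_
  · exact continuous_finset_prod _ fun k _ => entry_continuous d (i k) (j k)
  · exact continuous_finset_prod _ fun k _ =>
      (Complex.continuous_conj).comp (entry_continuous d (p k) (q k))

lemma homSpace_continuous {d r s : ℕ} {f : UG d → ℂ} (hf : f ∈ homSpace d r s) :
    Continuous f := by
  induction hf using Submodule.span_induction with
  | mem f hf => exact homGen_continuous hf
  | zero => exact continuous_const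
  | add f g _ _ hf hg => exact hf.add hg
  | smul c f _ hf => exact continuous_const.mul hf

lemma homSpace_conj {d t : ℕ} {f : UG d → ℂ} (hf : f ∈ homSpace d t t) :
    (fun U => (starRingEnd ℂ) (f U)) ∈ homSpace d t t := by
  induction hf using Submodule.span_induction with
  | mem f hf =>
    obtain ⟨i, j, p, q, rfl⟩ := hf
    apply Submodule.subset_span
    refine ⟨p, q, i, j, ?_⟩
    funext U
    simp only [map_mul, map_prod, Complex.conj_conj]
    ring
  | zero =>
    have h : (fun U : UG d => (starRingEnd ℂ) ((0 : UG d → ℂ) U)) = (0 : UG d → ℂ) := by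
      funext U; simp
    rw [h]; exact Submodule.zero_mem _
  | add f g _ _ hf hg =>
    have h : (fun U => (starRingEnd ℂ) ((f + g) U)) =
        (fun U => (starRingEnd ℂ) (f U)) + fun U => (starRingEnd ℂ) (g U) := by
      funext U; simp
    rw [h]; exact Submodule.add_mem _ hf hg
  | smul c f _ hf =>
    have h : (fun U => (starRingEnd ℂ) ((c • f) U)) =
        (starRingEnd ℂ c) • fun U => (starRingEnd ℂ) (f U) := by
      funext U; simp [mul_comm]
    rw [h]; exact Submodule.smul_mem _ _ hf

lemma one_mem_homSpace {d t : ℕ} (hd : 1 ≤ d) :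
    (fun _ : UG d => (1 : ℂ)) ∈ homSpace d t t := by
  have i0 : Fin d := ⟨0, hd⟩
  have key : (fun _ : UG d => (1 : ℂ)) =
      ∑ j : Fin t → Fin d, fun U : UG d =>
        (∏ k, (U : Matrix (Fin d) (Fin d) ℂ) i0 (j k)) *
        ∏ k, (starRingEnd ℂ) ((U : Matrix (Fin d) (Fin d) ℂ) i0 (j k)) := by
    funext U
    have h1 : (U : Matrix (Fin d) (Fin d) ℂ) * star (U : Matrix (Fin d) (Fin d) ℂ) = 1 :=
      Matrix.mem_unitaryGroup_iff.mp U.2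
    have h2 : ∑ k, (U : Matrix (Fin d) (Fin d) ℂ) i0 k *
        (starRingEnd ℂ) ((U : Matrix (Fin d) (Fin d) ℂ) i0 k) = 1 := by
      have := congrArg (fun M => M i0 i0) h1
      simpa [Matrix.mul_apply, Matrix.one_apply_eq, Matrix.star_apply] using this
    calc (1 : ℂ) = ∏ _k : Fin t, (1 : ℂ) := by simp
      _ = ∏ k : Fin t, ∑ jk : Fin d, (U : Matrix (Fin d) (Fin d) ℂ) i0 jk *
            (starRingEnd ℂ) ((U : Matrix (Fin d) (Fin d) ℂ) i0 jk) := by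
          rw [Finset.prod_congr rfl fun k _ => h2.symm]
      _ = ∑ j : Fin t → Fin d, ∏ k, (U : Matrix (Fin d) (Fin d) ℂ) i0 (j k) *
            (starRingEnd ℂ) ((U : Matrix (Fin d) (Fin d) ℂ) i0 (j k)) := by
          rw [Finset.prod_univ_sum]
          rfl
      _ = (∑ j : Fin t → Fin d, fun U : UG d =>
            (∏ k, (U : Matrix (Fin d) (Fin d) ℂ) i0 (j k)) *
            ∏ k, (starRingEnd ℂ) ((U : Matrix (Fin d) (Fin d) ℂ) i0 (j k))) U := by
          rw [Finset.sum_apply]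
          exact Finset.sum_congr rfl fun j _ => by rw [Finset.prod_mul_distrib]
  rw [key]
  exact Submodule.sum_mem _ fun j _ => Submodule.subset_span ⟨fun _ => i0, j, fun _ => i0, j, rfl⟩

lemma indep_upgrade {n : ℕ} (A : Matrix (Fin n) (Fin n) ℂ) {ι : Type*} [Fintype ι]
    (v : ι → (Fin n → ℂ))
    (hv : ∀ k i, (starRingEnd ℂ) (v k i) = ∑ j, A i j * v k j)
    (h : LinearIndependent ℝ v) : LinearIndependent ℂ v := by
  rw [Fintype.linearIndependent_iff] at h ⊢
  intro c hc k
  have hc' : ∀ i, ∑ k, c k * v k i = 0 := by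
    intro i
    have := congrFun hc i
    simpa [Finset.sum_apply] using this
  set x : Fin n → ℂ := fun i => ∑ k, ((c k).re : ℂ) * v k i with hxdef
  set y : Fin n → ℂ := fun i => ∑ k, ((c k).im : ℂ) * v k i with hydef
  have hxy : ∀ i, x i = -Complex.I * y i := by
    intro i
    have h0 := hc' i
    have heq : ∑ k, c k * v k i =
        (∑ k, ((c k).re : ℂ) * v k i) + Complex.I * ∑ k, ((c k).im : ℂ) * v k i := by
      rw [Finset.mul_sum, ← Finset.sum_add_distrib]
      refine Finset.sum_congr rfl fun k _ => ?_
      linear_combination (-(v k i)) * (Complex.re_add_im (c k))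
    rw [heq] at h0
    simp only [hxdef, hydef]
    linear_combination h0
  have hxreal : ∀ i, (starRingEnd ℂ) (x i) = ∑ j, A i j * x j := by
    intro i
    simp only [hxdef, map_sum, map_mul, Complex.conj_ofReal]
    calc ∑ k, ((c k).re : ℂ) * (starRingEnd ℂ) (v k i)
        = ∑ k, ((c k).re : ℂ) * ∑ j, A i j * v k j := by
          refine Finset.sum_congr rfl fun k _ => by rw [hv k i]
      _ = ∑ k, ∑ j, ((c k).re : ℂ) * (A i j * v k j) := by
          refine Finset.sum_congr rfl fun k _ => Finset.mul_sum _ _ _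
      _ = ∑ j, ∑ k, ((c k).re : ℂ) * (A i j * v k j) := Finset.sum_comm
      _ = ∑ j, A i j * ∑ k, ((c k).re : ℂ) * v k j := by
          refine Finset.sum_congr rfl fun j _ => ?_
          rw [Finset.mul_sum]
          refine Finset.sum_congr rfl fun k _ => by ring
  have hyreal : ∀ i, (starRingEnd ℂ) (y i) = ∑ j, A i j * y j := by
    intro i
    simp only [hydef, map_sum, map_mul, Complex.conj_ofReal]
    calc ∑ k, ((c k).im : ℂ) * (starRingEnd ℂ) (v k i)
        = ∑ k, ((c k).im : ℂ) * ∑ j, A i j * v k j := by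
          refine Finset.sum_congr rfl fun k _ => by rw [hv k i]
      _ = ∑ k, ∑ j, ((c k).im : ℂ) * (A i j * v k j) := by
          refine Finset.sum_congr rfl fun k _ => Finset.mul_sum _ _ _
      _ = ∑ j, ∑ k, ((c k).im : ℂ) * (A i j * v k j) := Finset.sum_comm
      _ = ∑ j, A i j * ∑ k, ((c k).im : ℂ) * v k j := by
          refine Finset.sum_congr rfl fun j _ => ?_
          rw [Finset.mul_sum]
          refine Finset.sum_congr rfl fun k _ => by ring
  have hy0 : ∀ i, y i = 0 := by
    intro i
    have h1 : (starRingEnd ℂ) (x i) = Complex.I * ∑ j, A i j * y j := by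
      rw [hxy i, map_mul]
      simp [hyreal i]
    have h2 : (starRingEnd ℂ) (x i) = -Complex.I * ∑ j, A i j * y j := by
      rw [hxreal i]
      rw [Finset.mul_sum]
      refine Finset.sum_congr rfl fun j _ => ?_
      rw [hxy j]; ring
    have h3 : ∑ j, A i j * y j = 0 := by
      have h12 := h1.symm.trans h2
      have h4 : (2 * Complex.I) * ∑ j, A i j * y j = 0 := by linear_combination h12
      rcases mul_eq_zero.mp h4 with h | h
      · exact absurd h (by simp [Complex.I_ne_zero, Complex.ext_iff])
      · exact h
    have h5 := hyreal i
    rw [h3] at h5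
    simpa using h5
  have hx0 : ∀ i, x i = 0 := by
    intro i
    rw [hxy i, hy0 i, mul_zero]
  have hre : ∀ k, (c k).re = 0 := by
    apply h
    funext i
    have heq : (∑ k, (c k).re • v k) i = ∑ k, ((c k).re : ℂ) * v k i := by
      rw [Finset.sum_apply]
      exact Finset.sum_congr rfl fun k _ => by
        rw [Pi.smul_apply, Complex.real_smul]
    rw [heq]
    exact hx0 i
  have him : ∀ k, (c k).im = 0 := by
    apply h
    funext i
    have heq : (∑ k, (c k).im • v k) i = ∑ k, ((c k).im : ℂ) * v k i := by
      rw [Finset.sum_apply]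
      exact Finset.sum_congr rfl fun k _ => by
        rw [Pi.smul_apply, Complex.real_smul]
    rw [heq]
    exact hy0 i
  exact Complex.ext (hre k) (him k)

open scoped Classical in
lemma myIsCompact_convexHull {E : Type} [NormedAddCommGroup E] [NormedSpace ℝ E]
    [FiniteDimensional ℝ E] {s : Set E} (hs : IsCompact s) :
    IsCompact (convexHull ℝ s) := by
  rcases s.eq_empty_or_nonempty with rfl | ⟨x₀, hx₀⟩
  · simp
  set m := finrank ℝ E + 1 with hm
  set F : (Fin m → ℝ) × (Fin m → E) → E := fun p => ∑ i, p.1 i • p.2 i with hF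
  have hFcont : Continuous F := by
    apply continuous_finset_sum
    intro i _
    exact ((continuous_apply i).comp continuous_fst).smul
      ((continuous_apply i).comp continuous_snd)
  set D : Set ((Fin m → ℝ) × (Fin m → E)) :=
    (stdSimplex ℝ (Fin m)) ×ˢ (Set.pi Set.univ fun _ => s) with hD
  have hDcomp : IsCompact D :=
    (isCompact_stdSimplex ℝ _).prod (isCompact_univ_pi fun _ => hs)
  have himage : convexHull ℝ s = F '' D := by
    apply Subset.antisymm
    · intro x hx
      obtain ⟨ι, hfin, z, w, hzs, haff, hwpos, hwsum, hwcomb⟩ :=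
        eq_pos_convex_span_of_mem_convexHull hx
      have hcard : Fintype.card ι ≤ m := by
        refine le_trans haff.card_le_finrank_succ ?_
        have := Submodule.finrank_le (vectorSpan ℝ (Set.range z))
        omega
      obtain ⟨τ⟩ : Nonempty (ι ↪ Fin m) := by
        rw [Function.Embedding.nonempty_iff_card_le]
        simpa using hcard
      set w' : Fin m → ℝ := fun j => if h : ∃ i, τ i = j then w h.choose else 0 with hw'
      set z' : Fin m → E := fun j => if h : ∃ i, τ i = j then z h.choose else x₀ with hz'
      have hwτ : ∀ i, w' (τ i) = w i := by
        intro i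
        have h : ∃ i', τ i' = τ i := ⟨i, rfl⟩
        have heq : h.choose = i := τ.injective h.choose_spec
        simp only [hw', dif_pos h, heq]
      have hzτ : ∀ i, z' (τ i) = z i := by
        intro i
        have h : ∃ i', τ i' = τ i := ⟨i, rfl⟩
        have heq : h.choose = i := τ.injective h.choose_spec
        simp only [hz', dif_pos h, heq]
      have hsum' : ∀ {M : Type} [AddCommMonoid M] (f : Fin m → M),
          (∀ j, ¬(∃ i, τ i = j) → f j = 0) → ∑ j, f j = ∑ i, f (τ i) := by
        intro M _ f hf
        have himg : ∑ jj ∈ Finset.univ.image (fun i => τ i), f jj = ∑ i, f (τ i) :=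
          Finset.sum_image (fun x _ y _ h => τ.injective h)
        rw [← himg]
        refine (Finset.sum_subset (Finset.subset_univ _) ?_).symm
        intro j _ hj
        refine hf j fun ⟨i, hi⟩ => hj ?_
        rw [Finset.mem_image]
        exact ⟨i, Finset.mem_univ i, hi⟩
      refine ⟨(w', z'), ⟨?_, ?_⟩, ?_⟩
      · constructor
        · intro j
          simp only [hw']
          split
          · exact (hwpos _).le
          · exact le_refl 0
        · rw [hsum' w' (fun j hj => by simp only [hw', dif_neg hj])]
          rw [← hwsum]
          exact Finset.sum_congr rfl fun i _ => hwτ i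
      · intro j _
        simp only [hz']
        split
        · exact hzs ⟨_, rfl⟩
        · exact hx₀
      · simp only [hF]
        calc ∑ j, w' j • z' j = ∑ i, w' (τ i) • z' (τ i) := by
              exact hsum' (fun j => w' j • z' j)
                (fun j hj => by simp only [hw', dif_neg hj, zero_smul])
          _ = ∑ i, w i • z i := Finset.sum_congr rfl fun i _ => by rw [hwτ i, hzτ i]
          _ = x := hwcomb
    · rintro _ ⟨⟨w, z⟩, ⟨⟨hw0, hw1⟩, hz⟩, rfl⟩
      exact (convex_convexHull ℝ s).sum_mem (fun i _ => hw0 i) hw1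
        fun i _ => subset_convexHull ℝ s (hz i (Set.mem_univ i))
  rw [himage]
  exact hDcomp.image hFcont

theorem stmt_18 (d t : ℕ) (hd : 1 ≤ d) (ht : 1 ≤ t)
    (μ : Measure (UG d)) [μ.IsHaarMeasure] [IsProbabilityMeasure μ] :
    ∃ (X : Finset (UG d)) (w : UG d → ℝ),
      IsWeightedDesign d t μ X w ∧ X.card ≤ Module.finrank ℂ (homSpace d t t) := by
  classical
  set H := homSpace d t t with hH
  set n := Module.finrank ℂ H with hn
  let b : Basis (Fin n) ℂ H := Module.finBasis ℂ H
  set g : Fin n → (UG d → ℂ) := fun i => ((b i : H) : UG d → ℂ) with hg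
  have hg_mem : ∀ i, g i ∈ H := fun i => (b i).2
  have hg_cont : ∀ i, Continuous (g i) := fun i => homSpace_continuous (hg_mem i)
  -- integrability helper
  have hInt : ∀ {f : UG d → ℂ}, Continuous f → Integrable f μ := by
    intro f hf
    exact hf.integrable_of_hasCompactSupport (HasCompactSupport.of_compactSpace f)
  -- H is the span of the basis functions
  have hspan : H = Submodule.span ℂ (Set.range g) := by
    have h1 : Set.range g = H.subtype '' Set.range b := by
      rw [← Set.range_comp]; rfl
    rw [h1, Submodule.span_image, b.span_eq, Submodule.map_top, Submodule.range_subtype]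
  -- conjugation matrix
  set A : Matrix (Fin n) (Fin n) ℂ := fun i j =>
    b.repr ⟨fun U => (starRingEnd ℂ) (g i U), homSpace_conj (hg_mem i)⟩ j with hA
  have hA_eq : ∀ i U, (starRingEnd ℂ) (g i U) = ∑ j, A i j * g j U := by
    intro i U
    set F : H := ⟨fun U => (starRingEnd ℂ) (g i U), homSpace_conj (hg_mem i)⟩ with hF
    have h1 : ∑ j, b.repr F j • b j = F := b.sum_repr F
    have h2 : ∑ j, b.repr F j • (g j) = fun U => (starRingEnd ℂ) (g i U) := by
      have := congrArg (H.subtype) h1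
      rw [map_sum] at this
      simpa [hg] using this
    have h3 := congrFun h2 U
    rw [Finset.sum_apply] at h3
    rw [← h3]
    exact Finset.sum_congr rfl fun j _ => by rw [Pi.smul_apply, smul_eq_mul]
  -- the evaluation map
  set Φ : UG d → (Fin n → ℂ) := fun U i => g i U with hΦ
  have hΦcont : Continuous Φ := continuous_pi fun i => hg_cont i
  have hΦint : Integrable Φ μ :=
    hΦcont.integrable_of_hasCompactSupport (HasCompactSupport.of_compactSpace Φ)
  -- the real subspace of conjugation-compatible vectors
  set R : Submodule ℝ (Fin n → ℂ) :=
    { carrier := {v | ∀ i, (starRingEnd ℂ) (v i) = ∑ j, A i j * v j}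
      add_mem' := by
        intro v w hv hw i
        simp only [Pi.add_apply, map_add, hv i, hw i, mul_add, Finset.sum_add_distrib]
      zero_mem' := by intro i; simp
      smul_mem' := by
        intro r v hv i
        simp only [Pi.smul_apply, Complex.real_smul, map_mul, Complex.conj_ofReal, hv i,
          Finset.mul_sum]
        exact Finset.sum_congr rfl fun j _ => by ring } with hR
  have hΦR : ∀ U, Φ U ∈ R := fun U i => hA_eq i U
  have hRrank : Module.finrank ℝ R ≤ n := by
    let bR := Module.finBasis ℝ R
    have hind : LinearIndependent ℝ (fun k => ((bR k : Fin n → ℂ))) :=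
      bR.linearIndependent.map' R.subtype R.ker_subtype
    have hindC : LinearIndependent ℂ (fun k => ((bR k : Fin n → ℂ))) :=
      indep_upgrade A _ (fun k i => (bR k).2 i) hind
    have hcard := hindC.fintype_card_le_finrank
    simpa [Module.finrank_fintype_fun_eq_card] using hcard
  set S : Submodule ℝ (Fin n → ℂ) := Submodule.span ℝ (Set.range Φ) with hS
  have hSR : S ≤ R := Submodule.span_le.mpr (by rintro _ ⟨U, rfl⟩; exact hΦR U)
  have hSrank : Module.finrank ℝ S ≤ n := le_trans (Submodule.finrank_mono hSR) hRrank
  -- the constant function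
  have hone : (fun _ : UG d => (1 : ℂ)) ∈ H := one_mem_homSpace hd
  set c1 : Fin n → ℂ := fun i => b.repr ⟨fun _ => 1, hone⟩ i with hc1def
  have hc1 : ∀ U, ∑ i, c1 i * g i U = 1 := by
    intro U
    set F : H := ⟨fun _ => (1 : ℂ), hone⟩ with hF
    have h1 : ∑ j, b.repr F j • b j = F := b.sum_repr F
    have h2 : ∑ j, b.repr F j • (g j) = fun _ : UG d => (1 : ℂ) := by
      have := congrArg (H.subtype) h1
      rw [map_sum] at this
      simpa [hg] using this
    have h3 := congrFun h2 U
    rw [Finset.sum_apply] at h3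
    rw [← h3]
    exact Finset.sum_congr rfl fun j _ => by rw [Pi.smul_apply, smul_eq_mul]
  set L : (Fin n → ℂ) →ₗ[ℝ] ℝ :=
    { toFun := fun v => (∑ i, c1 i * v i).re
      map_add' := by
        intro v w
        simp only [Pi.add_apply, mul_add, Finset.sum_add_distrib, Complex.add_re]
      map_smul' := by
        intro r v
        simp only [Pi.smul_apply, Complex.real_smul, RingHom.id_apply, smul_eq_mul]
        rw [show ∑ i, c1 i * ((r : ℂ) * v i) = (r : ℂ) * ∑ i, c1 i * v i by
          rw [Finset.mul_sum]; exact Finset.sum_congr rfl fun i _ => by ring]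
        rw [Complex.re_ofReal_mul] } with hL
  have hLΦ : ∀ U, L (Φ U) = 1 := by
    intro U
    simp only [hL, LinearMap.coe_mk, AddHom.coe_mk]
    rw [show ∑ i, c1 i * Φ U i = 1 from hc1 U]
    exact Complex.one_re
  -- the barycenter lies in the convex hull of the range of Φ
  have hKc : IsCompact (Set.range Φ) := isCompact_range hΦcont
  have hc_mem : (∫ U, Φ U ∂μ) ∈ convexHull ℝ (Set.range Φ) := by
    refine (convex_convexHull ℝ _).integral_mem
      (myIsCompact_convexHull hKc).isClosed
      (Filter.Eventually.of_forall fun U => subset_convexHull ℝ _ ⟨U, rfl⟩) hΦint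
  -- Carathéodory
  obtain ⟨ι, hfin, z, wι, hzs, haff, hwpos, hwsum, hwcomb⟩ :=
    eq_pos_convex_span_of_mem_convexHull hc_mem
  have hzU : ∀ i : ι, ∃ U : UG d, Φ U = z i := fun i => hzs ⟨i, rfl⟩
  choose Uf hUf using hzU
  have hUinj : Function.Injective Uf := by
    intro i j hij
    apply haff.injective
    rw [← hUf i, ← hUf j, hij]
  have hι : Nonempty ι := by
    rcases isEmpty_or_nonempty ι with h | h
    · rw [Finset.univ_eq_empty, Finset.sum_empty] at hwsum
      norm_num at hwsum
    · exact h
  set X : Finset (UG d) := Finset.image Uf Finset.univ with hX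
  set w : UG d → ℝ := fun V => ∑ i, if Uf i = V then wι i else 0 with hw
  have hwUf : ∀ i, w (Uf i) = wι i := by
    intro i
    simp only [hw]
    simp [hUinj.eq_iff]
  have hXsum : ∀ {M : Type} [AddCommMonoid M] (f : UG d → M),
      ∑ V ∈ X, f V = ∑ i, f (Uf i) := by
    intro M _ f
    exact Finset.sum_image fun x _ y _ h => hUinj h
  have hXne : X.Nonempty := by
    obtain ⟨i⟩ := hι
    exact ⟨Uf i, Finset.mem_image_of_mem _ (Finset.mem_univ i)⟩
  have hwpos' : ∀ V ∈ X, 0 < w V := by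
    intro V hV
    obtain ⟨i, _, rfl⟩ := Finset.mem_image.mp hV
    rw [hwUf i]
    exact hwpos i
  have hwsum' : ∑ V ∈ X, w V = 1 := by
    rw [hXsum w]
    rw [← hwsum]
    exact Finset.sum_congr rfl fun i _ => hwUf i
  -- the vector identity
  have hvec : ∑ V ∈ X, w V • Φ V = ∫ U, Φ U ∂μ := by
    rw [hXsum (fun V => w V • Φ V)]
    rw [← hwcomb]
    refine Finset.sum_congr rfl fun i _ => by rw [hwUf i, hUf i]
  -- componentwise identity for the basis functions
  have hcomp : ∀ i0 : Fin n, ∑ V ∈ X, (w V : ℂ) * g i0 V = ∫ U, g i0 U ∂μ := by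
    intro i0
    have h1 : (∑ V ∈ X, w V • Φ V) i0 = ∑ V ∈ X, (w V : ℂ) * g i0 V := by
      rw [Finset.sum_apply]
      exact Finset.sum_congr rfl fun V _ => by
        rw [Pi.smul_apply, Complex.real_smul]
    have h2 : (∫ U, Φ U ∂μ) i0 = ∫ U, g i0 U ∂μ := by
      have h3 := (ContinuousLinearMap.proj (R := ℂ) (φ := fun _ : Fin n => ℂ)
        i0).integral_comp_comm hΦint
      exact h3.symm
    rw [← h1, hvec, h2]
  -- the design property for all of homSpace
  have hdesign : ∀ f ∈ homSpace d t t, ∑ V ∈ X, (w V : ℂ) * f V = ∫ U, f U ∂μ := by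
    have key : ∀ f ∈ homSpace d t t,
        Continuous f ∧ ∑ V ∈ X, (w V : ℂ) * f V = ∫ U, f U ∂μ := by
      intro f hf
      rw [← hH, hspan] at hf
      induction hf using Submodule.span_induction with
      | mem f hf =>
        obtain ⟨i0, rfl⟩ := hf
        exact ⟨hg_cont i0, hcomp i0⟩
      | zero =>
        refine ⟨continuous_const, ?_⟩
        simp
      | add f1 f2 _ _ h1 h2 =>
        refine ⟨h1.1.add h2.1, ?_⟩
        have hint1 := hInt h1.1
        have hint2 := hInt h2.1
        calc ∑ V ∈ X, (w V : ℂ) * (f1 + f2) V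
            = (∑ V ∈ X, (w V : ℂ) * f1 V) + ∑ V ∈ X, (w V : ℂ) * f2 V := by
              rw [← Finset.sum_add_distrib]
              exact Finset.sum_congr rfl fun V _ => by
                rw [Pi.add_apply]; ring
          _ = (∫ U, f1 U ∂μ) + ∫ U, f2 U ∂μ := by rw [h1.2, h2.2]
          _ = ∫ U, (f1 + f2) U ∂μ := (integral_add hint1 hint2).symm
      | smul c f1 _ h1 =>
        refine ⟨continuous_const.mul h1.1, ?_⟩
        calc ∑ V ∈ X, (w V : ℂ) * (c • f1) V
            = c * ∑ V ∈ X, (w V : ℂ) * f1 V := by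
              rw [Finset.mul_sum]
              exact Finset.sum_congr rfl fun V _ => by
                rw [Pi.smul_apply, smul_eq_mul]; ring
          _ = c * ∫ U, f1 U ∂μ := by rw [h1.2]
          _ = ∫ U, c • f1 U ∂μ := (integral_smul c f1).symm
          _ = ∫ U, (c • f1) U ∂μ := by
              refine integral_congr_ae (Filter.Eventually.of_forall fun U => rfl)
    exact fun f hf => (key f hf).2
  -- cardinality bound
  have hcard : X.card ≤ n := by
    have hXcard : X.card = Fintype.card ι := by
      rw [hX, Finset.card_image_of_injective _ hUinj, Finset.card_univ]
    have hvs : vectorSpan ℝ (Set.range z) ≤ S ⊓ LinearMap.ker L := by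
      rw [vectorSpan_def]
      rw [Submodule.span_le]
      rintro _ ⟨x, hx, y, hy, rfl⟩
      obtain ⟨i1, rfl⟩ := hx
      obtain ⟨i2, rfl⟩ := hy
      show z i1 -ᵥ z i2 ∈ (S ⊓ LinearMap.ker L : Submodule ℝ (Fin n → ℂ))
      rw [vsub_eq_sub, Submodule.mem_inf]
      constructor
      · refine Submodule.sub_mem S ?_ ?_
        · rw [← hUf i1]; exact Submodule.subset_span ⟨Uf i1, rfl⟩
        · rw [← hUf i2]; exact Submodule.subset_span ⟨Uf i2, rfl⟩
      · rw [LinearMap.mem_ker, map_sub, ← hUf i1, ← hUf i2, hLΦ, hLΦ, sub_self]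
    have hlt : S ⊓ LinearMap.ker L < S := by
      rw [SetLike.lt_iff_le_and_exists]
      refine ⟨inf_le_left, Φ 1, Submodule.subset_span ⟨1, rfl⟩, ?_⟩
      rw [Submodule.mem_inf]
      rintro ⟨-, hker⟩
      rw [LinearMap.mem_ker, hLΦ 1] at hker
      norm_num at hker
    have hfr1 : Module.finrank ℝ (S ⊓ LinearMap.ker L : Submodule ℝ (Fin n → ℂ)) <
        Module.finrank ℝ S := Submodule.finrank_lt_finrank_of_lt hlt
    have hfr2 : Module.finrank ℝ (vectorSpan ℝ (Set.range z)) ≤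
        Module.finrank ℝ (S ⊓ LinearMap.ker L : Submodule ℝ (Fin n → ℂ)) :=
      Submodule.finrank_mono hvs
    have hfr3 := haff.finrank_vectorSpan_add_one
    rw [hXcard, ← hfr3]
    omega
  exact ⟨X, w, ⟨hXne, hwpos', hwsum', hdesign⟩, hcard⟩
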